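/- Let β ∈ (0,1) be a real number, n ≥ 1 and N natural numbers, x : Fin n → Fin N → Bool the experts' predictions, c : Fin N → Bool the correct labels, and r : Fin N → Fin 3 a routing function assigning each trial to one of three learners. For expert i, learner j, and time t ≤ N, let mist j i t denote the number of trials s < t with r s = j and x i s ≠ c s, let w j i t = β^(mist j i t), let W j t = ∑_{i} w j i t, and for a trial t let F t = (∑_{i : x i t ≠ c t} w (r t) i t) / W (r t) t be the fraction of the responsible learner's weight on the wrong answer at trial t. Then for any choice of experts k_1, k_2, k_3, ∑_{t < N} F t ≤ ((mist 1 k_1 N + mist 2 k_2 N + mist 3 k_3 N) * ln(1/β) + 3 * ln n) / (1 - β). -/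

import Mathlib

/-- Number of mistakes expert `i` made on the trials routed to learner `j`
among the first `t` trials. -/
def mist {n N : ℕ} (x : Fin n → Fin N → Bool) (c : Fin N → Bool)
    (r : Fin N → Fin 3) (j : Fin 3) (i : Fin n) (t : ℕ) : ℕ :=
  (Finset.univ.filter (fun s : Fin N => (s : ℕ) < t ∧ r s = j ∧ x i s ≠ c s)).card

/-- Weight of expert `i` in learner `j` just before trial `t`. -/
noncomputable def w (β : ℝ) {n N : ℕ} (x : Fin n → Fin N → Bool) (c : Fin N → Bool)
    (r : Fin N → Fin 3) (j : Fin 3) (i : Fin n) (t : ℕ) : ℝ :=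
  β ^ (mist x c r j i t)

/-- Total weight of learner `j` just before trial `t`. -/
noncomputable def W (β : ℝ) {n N : ℕ} (x : Fin n → Fin N → Bool) (c : Fin N → Bool)
    (r : Fin N → Fin 3) (j : Fin 3) (t : ℕ) : ℝ :=
  ∑ i : Fin n, w β x c r j i t

/-- Fraction of the responsible learner's total weight placed on the wrong
answer at trial `t`. -/
noncomputable def F (β : ℝ) {n N : ℕ} (x : Fin n → Fin N → Bool) (c : Fin N → Bool)
    (r : Fin N → Fin 3) (t : Fin N) : ℝ :=
  (∑ i ∈ Finset.univ.filter (fun i : Fin n => x i t ≠ c t), w β x c r (r t) i (t : ℕ)) /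
    W β x c r (r t) (t : ℕ)

/-- Sum of the weights of the currently-wrong experts in learner `j`. -/
noncomputable def S (β : ℝ) {n N : ℕ} (x : Fin n → Fin N → Bool) (c : Fin N → Bool)
    (r : Fin N → Fin 3) (j : Fin 3) (t : Fin N) : ℝ :=
  ∑ i ∈ Finset.univ.filter (fun i : Fin n => x i t ≠ c t), w β x c r j i (t : ℕ)

section Aux

variable {β : ℝ} {n N : ℕ} {x : Fin n → Fin N → Bool} {c : Fin N → Bool} {r : Fin N → Fin 3}

lemma mist_succ (j : Fin 3) (i : Fin n) (t : Fin N) :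
    mist x c r j i ((t : ℕ) + 1) =
      mist x c r j i t + (if r t = j ∧ x i t ≠ c t then 1 else 0) := by
  unfold mist
  have hsplit : (Finset.univ.filter (fun s : Fin N => (s : ℕ) < (t : ℕ) + 1 ∧ r s = j ∧ x i s ≠ c s))
      = (Finset.univ.filter (fun s : Fin N => (s : ℕ) < (t : ℕ) ∧ r s = j ∧ x i s ≠ c s)) ∪
        (Finset.univ.filter (fun s : Fin N => s = t ∧ r s = j ∧ x i s ≠ c s)) := by
    ext s
    simp only [Finset.mem_filter, Finset.mem_union, Finset.mem_univ, true_and]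
    constructor
    · rintro ⟨hlt, hp⟩
      rcases Nat.lt_succ_iff_lt_or_eq.mp hlt with h | h
      · exact Or.inl ⟨h, hp⟩
      · exact Or.inr ⟨Fin.ext h, hp⟩
    · rintro (⟨h, hp⟩ | ⟨h, hp⟩)
      · exact ⟨Nat.lt_succ_of_lt h, hp⟩
      · exact ⟨by simp [h], hp⟩
  rw [hsplit, Finset.card_union_of_disjoint]
  · congr 1
    by_cases h : r t = j ∧ x i t ≠ c t
    · rw [if_pos h]
      have : (Finset.univ.filter (fun s : Fin N => s = t ∧ r s = j ∧ x i s ≠ c s)) = {t} := by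
        ext s
        simp only [Finset.mem_filter, Finset.mem_univ, true_and, Finset.mem_singleton]
        constructor
        · rintro ⟨hs, _⟩; exact hs
        · rintro rfl; exact ⟨rfl, h⟩
      rw [this, Finset.card_singleton]
    · rw [if_neg h, Finset.card_eq_zero]
      ext s
      simp only [Finset.mem_filter, Finset.mem_univ, true_and, Finset.notMem_empty, iff_false]
      rintro ⟨rfl, hp⟩; exact h hp
  · rw [Finset.disjoint_left]
    intro s hs hs'
    simp only [Finset.mem_filter, Finset.mem_univ, true_and] at hs hs'
    rw [hs'.1] at hs
    exact lt_irrefl _ hs.1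

lemma w_pos (hβ0 : 0 < β) (j : Fin 3) (i : Fin n) (t : ℕ) :
    0 < w β x c r j i t := pow_pos hβ0 _

lemma W_pos (hβ0 : 0 < β) (hn : 1 ≤ n) (j : Fin 3) (t : ℕ) :
    0 < W β x c r j t := by
  have : Nonempty (Fin n) := ⟨⟨0, hn⟩⟩
  exact Finset.sum_pos (fun i _ => w_pos hβ0 j i t) Finset.univ_nonempty

lemma W_succ_eq (j : Fin 3) (t : Fin N) (hj : r t = j) :
    W β x c r j ((t : ℕ) + 1) = W β x c r j t - (1 - β) * S β x c r j t := by
  have h1 : ∀ i : Fin n, w β x c r j i ((t : ℕ) + 1)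
      = w β x c r j i t - (1 - β) * (if x i t ≠ c t then w β x c r j i t else 0) := by
    intro i
    unfold w
    rw [mist_succ]
    by_cases h : x i t ≠ c t
    · rw [if_pos ⟨hj, h⟩, if_pos h, pow_succ]
      ring
    · rw [if_neg (by tauto), if_neg h]
      simp
  unfold W S
  rw [Finset.sum_congr rfl (fun i _ => h1 i), Finset.sum_sub_distrib, ← Finset.mul_sum,
    ← Finset.sum_filter]

lemma W_succ_ne (j : Fin 3) (t : Fin N) (hj : r t ≠ j) :
    W β x c r j ((t : ℕ) + 1) = W β x c r j t := by
  unfold W w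
  refine Finset.sum_congr rfl (fun i _ => ?_)
  rw [mist_succ]
  simp [hj]

lemma F_eq (t : Fin N) : F β x c r t = S β x c r (r t) t / W β x c r (r t) t := rfl

lemma log_step (hβ0 : 0 < β) (hn : 1 ≤ n) (j : Fin 3) (t : Fin N) (hj : r t = j) :
    Real.log (W β x c r j ((t : ℕ) + 1)) ≤
      Real.log (W β x c r j t) - (1 - β) * F β x c r t := by
  have hWt : 0 < W β x c r j t := W_pos hβ0 hn j t
  have hWt1 : 0 < W β x c r j ((t : ℕ) + 1) := W_pos hβ0 hn j _
  have hF : F β x c r t = S β x c r j t / W β x c r j t := by rw [F_eq, hj]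
  have hfac : W β x c r j ((t : ℕ) + 1) = W β x c r j t * (1 - (1 - β) * F β x c r t) := by
    rw [W_succ_eq j t hj, hF]
    field_simp
  have hpos : 0 < 1 - (1 - β) * F β x c r t := by
    have h := div_pos hWt1 hWt
    rwa [hfac, mul_div_cancel_left₀ _ (ne_of_gt hWt)] at h
  rw [hfac, Real.log_mul (ne_of_gt hWt) (ne_of_gt hpos)]
  have := Real.log_le_sub_one_of_pos hpos
  linarith

lemma main_ind (hβ0 : 0 < β) (hn : 1 ≤ n) (m : ℕ) (hm : m ≤ N) :
    (1 - β) * ∑ t ∈ Finset.univ.filter (fun t : Fin N => (t : ℕ) < m), F β x c r t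
      ≤ ∑ j : Fin 3, (Real.log (W β x c r j 0) - Real.log (W β x c r j m)) := by
  induction m with
  | zero => simp
  | succ m ih =>
    have hmN : m < N := hm
    set t₀ : Fin N := ⟨m, hmN⟩ with ht₀
    have hfilter : (Finset.univ.filter (fun t : Fin N => (t : ℕ) < m + 1))
        = insert t₀ (Finset.univ.filter (fun t : Fin N => (t : ℕ) < m)) := by
      ext s
      simp only [Finset.mem_filter, Finset.mem_univ, true_and, Finset.mem_insert]
      constructor
      · intro h
        rcases Nat.lt_succ_iff_lt_or_eq.mp h with h | h
        · exact Or.inr h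
        · exact Or.inl (Fin.ext h)
      · rintro (rfl | h)
        · exact Nat.lt_succ_self m
        · exact Nat.lt_succ_of_lt h
    have hnotmem : t₀ ∉ Finset.univ.filter (fun t : Fin N => (t : ℕ) < m) := by
      simp [ht₀]
    rw [hfilter, Finset.sum_insert hnotmem]
    have key : ∀ j : Fin 3, Real.log (W β x c r j (m + 1)) ≤
        Real.log (W β x c r j m) - (if r t₀ = j then (1 - β) * F β x c r t₀ else 0) := by
      intro j
      by_cases hj : r t₀ = j
      · rw [if_pos hj]
        exact log_step hβ0 hn j t₀ hj
      · rw [if_neg hj, sub_zero, W_succ_ne j t₀ hj]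
    have hsum := Finset.sum_le_sum (fun j (_ : j ∈ Finset.univ) => key j)
    rw [Finset.sum_sub_distrib, Finset.sum_ite_eq Finset.univ (r t₀)
      (fun _ => (1 - β) * F β x c r t₀)] at hsum
    simp only [Finset.mem_univ, if_true] at hsum
    have ihm := ih (le_of_lt hmN)
    have e1 : ∑ j : Fin 3, (Real.log (W β x c r j 0) - Real.log (W β x c r j (m + 1)))
        = ∑ j : Fin 3, Real.log (W β x c r j 0) - ∑ j : Fin 3, Real.log (W β x c r j (m + 1)) :=
      Finset.sum_sub_distrib _ _
    have e2 : ∑ j : Fin 3, (Real.log (W β x c r j 0) - Real.log (W β x c r j m))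
        = ∑ j : Fin 3, Real.log (W β x c r j 0) - ∑ j : Fin 3, Real.log (W β x c r j m) :=
      Finset.sum_sub_distrib _ _
    rw [e1]
    rw [e2] at ihm
    have : (1 - β) * (F β x c r t₀ + ∑ t ∈ Finset.univ.filter (fun t : Fin N => (t : ℕ) < m),
        F β x c r t) = (1 - β) * F β x c r t₀ + (1 - β) *
        ∑ t ∈ Finset.univ.filter (fun t : Fin N => (t : ℕ) < m), F β x c r t := by ring
    rw [this]
    linarith

lemma W_zero (j : Fin 3) : W β x c r j 0 = n := by
  unfold W w mist
  have : ∀ i : Fin n,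
      (Finset.univ.filter (fun s : Fin N => (s : ℕ) < 0 ∧ r s = j ∧ x i s ≠ c s)) = ∅ := by
    intro i
    ext s
    simp
  simp [this]

lemma log_W_final (hβ0 : 0 < β) (j : Fin 3) (k : Fin n) :
    (mist x c r j k N : ℝ) * Real.log β ≤ Real.log (W β x c r j N) := by
  have h1 : w β x c r j k N ≤ W β x c r j N :=
    Finset.single_le_sum (fun i _ => le_of_lt (w_pos hβ0 j i N)) (Finset.mem_univ k)
  have h2 := Real.log_le_log (w_pos hβ0 j k N) h1
  calc (mist x c r j k N : ℝ) * Real.log β = Real.log (w β x c r j k N) := by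
        unfold w; rw [Real.log_pow]
    _ ≤ Real.log (W β x c r j N) := h2

end Aux

theorem crwm_mistake_bound
    (β : ℝ) (hβ0 : 0 < β) (hβ1 : β < 1)
    (n N : ℕ) (hn : 1 ≤ n)
    (x : Fin n → Fin N → Bool) (c : Fin N → Bool)
    (r : Fin N → Fin 3)
    (k₁ k₂ k₃ : Fin n) :
    ∑ t : Fin N, F β x c r t ≤
      (((mist x c r 0 k₁ N : ℝ) + (mist x c r 1 k₂ N : ℝ) + (mist x c r 2 k₃ N : ℝ)) *
          Real.log (1 / β) + 3 * Real.log n) / (1 - β) := by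
  have h1β : (0 : ℝ) < 1 - β := by linarith
  have hmain := main_ind (x := x) (c := c) (r := r) hβ0 hn N le_rfl
  have hfull : (Finset.univ.filter (fun t : Fin N => (t : ℕ) < N)) = Finset.univ := by
    ext t; simp [t.is_lt]
  rw [hfull] at hmain
  have hb : ∀ (j : Fin 3) (k : Fin n),
      Real.log (W β x c r j 0) - Real.log (W β x c r j N) ≤
        (mist x c r j k N : ℝ) * Real.log (1 / β) + Real.log n := by
    intro j k
    have h1 := log_W_final (x := x) (c := c) (r := r) hβ0 j k
    have h2 : Real.log (W β x c r j 0) = Real.log n := by rw [W_zero]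
    have h3 : Real.log (1 / β) = -Real.log β := by rw [one_div, Real.log_inv]
    rw [h2, h3]
    linarith
  rw [le_div_iff₀ h1β]
  have hexp : ∑ j : Fin 3, (Real.log (W β x c r j 0) - Real.log (W β x c r j N)) ≤
      ((mist x c r 0 k₁ N : ℝ) + (mist x c r 1 k₂ N : ℝ) + (mist x c r 2 k₃ N : ℝ)) *
        Real.log (1 / β) + 3 * Real.log n := by
    rw [Fin.sum_univ_three]
    have b1 := hb 0 k₁
    have b2 := hb 1 k₂
    have b3 := hb 2 k₃
    nlinarith [b1, b2, b3]
  nlinarith [hmain, hexp]
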